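/- Let (L, ρ, τ) be a probabilistic metric space whose triangle function τ is sup-continuous, and let P_f(L) be the family of all nonempty closed subsets of L. Then the map H(A,B) = F_{AB} is a probabilistic metric on P_f(L) with triangle function τ; that is, H(A,A) = ε₀; H(A,B) = ε₀ implies A = B; H(A,B) = H(B,A); and H(A,C) ≥ τ(H(A,B), H(B,C)) for all A, B, C ∈ P_f(L). -/

import Mathlib

/-- The modified Lévy distance between two functions `F G : ℝ → ℝ`:
the infimum of all `h > 0` such that for every `x ∈ (-1/h, 1/h)` the inequalities
`F (x - h) - h ≤ G x ≤ F (x + h) + h` and `G (x - h) - h ≤ F x ≤ G (x + h) + h` hold. -/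
noncomputable def dL (F G : ℝ → ℝ) : ℝ :=
  sInf {h : ℝ | 0 < h ∧ ∀ x ∈ Set.Ioo (-h⁻¹) h⁻¹,
    (F (x - h) - h ≤ G x ∧ G x ≤ F (x + h) + h) ∧
    (G (x - h) - h ≤ F x ∧ F x ≤ G (x + h) + h)}

/-- A distance distribution function: a nondecreasing, left-continuous function
`F : ℝ → [0,1]` with `F x = 0` for all `x ≤ 0`.  `Δ⁺` is the set of all such functions. -/
def IsDDF (F : ℝ → ℝ) : Prop :=
  Monotone F ∧ (∀ x : ℝ, ContinuousWithinAt F (Set.Iio x) x) ∧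
    (∀ x : ℝ, F x ≤ 1) ∧ (∀ x : ℝ, x ≤ 0 → F x = 0)

/-- The distance distribution function `ε₀`. -/
noncomputable def eps0 : ℝ → ℝ := fun x => if x ≤ 0 then 0 else 1

/-- A triangle function `τ` on `Δ⁺`: commutative, associative, nondecreasing in each
argument, continuous (sequentially, with respect to the modified Lévy metric `dL`,
which metrizes the topology of weak convergence), with identity `ε₀`. -/
structure IsTriangleFn (τ : (ℝ → ℝ) → (ℝ → ℝ) → (ℝ → ℝ)) : Prop where
  isDDF : ∀ F G, IsDDF F → IsDDF G → IsDDF (τ F G)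
  comm : ∀ F G, IsDDF F → IsDDF G → τ F G = τ G F
  assoc : ∀ F G K, IsDDF F → IsDDF G → IsDDF K → τ (τ F G) K = τ F (τ G K)
  mono : ∀ F₁ F₂ G₁ G₂, IsDDF F₁ → IsDDF F₂ → IsDDF G₁ → IsDDF G₂ →
    F₁ ≤ F₂ → G₁ ≤ G₂ → τ F₁ G₁ ≤ τ F₂ G₂
  ident : ∀ F, IsDDF F → τ F eps0 = F
  continuous : ∀ (Fn Gn : ℕ → ℝ → ℝ) (F G : ℝ → ℝ),
    (∀ n, IsDDF (Fn n)) → (∀ n, IsDDF (Gn n)) → IsDDF F → IsDDF G →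
    Filter.Tendsto (fun n => dL (Fn n) F) Filter.atTop (nhds 0) →
    Filter.Tendsto (fun n => dL (Gn n) G) Filter.atTop (nhds 0) →
    Filter.Tendsto (fun n => dL (τ (Fn n) (Gn n)) (τ F G)) Filter.atTop (nhds 0)

/-- A probabilistic metric space `(L, ρ, τ)`. -/
structure IsPMSpace {L : Type*} (ρ : L → L → ℝ → ℝ)
    (τ : (ℝ → ℝ) → (ℝ → ℝ) → (ℝ → ℝ)) : Prop where
  isDDF : ∀ p q, IsDDF (ρ p q)
  triangleFn : IsTriangleFn τ
  refl : ∀ p, ρ p p = eps0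
  eq_of : ∀ p q, ρ p q = eps0 → p = q
  symm : ∀ p q, ρ p q = ρ q p
  tri_ineq : ∀ p q r, τ (ρ p q) (ρ q r) ≤ ρ p r

/-- `τ` is sup-continuous: `τ (sup_i F_i) G = sup_i τ (F_i) G` pointwise, for every
(nonempty) family `{F_i} ⊆ Δ⁺` and every `G ∈ Δ⁺`. -/
def SupContinuous (τ : (ℝ → ℝ) → (ℝ → ℝ) → (ℝ → ℝ)) : Prop :=
  ∀ (ι : Type) [Nonempty ι] (Fi : ι → ℝ → ℝ) (G : ℝ → ℝ),
    (∀ i, IsDDF (Fi i)) → IsDDF G →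
    ∀ x : ℝ, τ (fun y => ⨆ i, Fi i y) G x = ⨆ i, τ (Fi i) G x

/-- Condition (W): for all `F, G ∈ Δ⁺`, `x > 0` and real `α, β`,
`F x > α` and `G x > β` imply `τ F G x > max (α + β - 1) 0`. -/
def CondW (τ : (ℝ → ℝ) → (ℝ → ℝ) → (ℝ → ℝ)) : Prop :=
  ∀ F G, IsDDF F → IsDDF G → ∀ x : ℝ, 0 < x → ∀ α β : ℝ,
    α < F x → β < G x → max (α + β - 1) 0 < τ F G x

/-- Convergence of a sequence in the strong topology of the PM space:
for every `t > 0`, eventually `F_{p_n p}(t) > 1 - t`. -/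
def SConvSeq {L : Type*} (ρ : L → L → ℝ → ℝ) (pn : ℕ → L) (p : L) : Prop :=
  ∀ t : ℝ, 0 < t → ∃ n₀ : ℕ, ∀ n ≥ n₀, 1 - t < ρ (pn n) p t

/-- Cauchy sequence in a PM space. -/
def SCauchySeq {L : Type*} (ρ : L → L → ℝ → ℝ) (pn : ℕ → L) : Prop :=
  ∀ t : ℝ, 0 < t → ∃ n₀ : ℕ, ∀ m ≥ n₀, ∀ n ≥ n₀, 1 - t < ρ (pn m) (pn n) t

/-- Completeness of a PM space: every Cauchy sequence converges in the strong topology. -/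
def SComplete {L : Type*} (ρ : L → L → ℝ → ℝ) : Prop :=
  ∀ pn : ℕ → L, SCauchySeq ρ pn → ∃ p : L, SConvSeq ρ pn p

/-- The closure of a set in the strong topology of a PM space (the strong topology is
metrizable, so the closure coincides with the sequential closure). -/
def SClosure {L : Type*} (ρ : L → L → ℝ → ℝ) (A : Set L) : Set L :=
  {q | ∃ pn : ℕ → L, (∀ n, pn n ∈ A) ∧ SConvSeq ρ pn q}

/-- A set closed in the strong topology of a PM space. -/
def SClosed {L : Type*} (ρ : L → L → ℝ → ℝ) (A : Set L) : Prop :=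
  SClosure ρ A ⊆ A

/-- The probabilistic distance from a point to a set: `F_{pB}(x) = sup {F_{pq}(x) : q ∈ B}`. -/
noncomputable def probDistToSet {L : Type*} (ρ : L → L → ℝ → ℝ) (p : L) (B : Set L)
    (x : ℝ) : ℝ :=
  sSup ((fun q => ρ p q x) '' B)

/-- `Γ*_{AB}(x) = inf {F_{pB}(x) : p ∈ A}`. -/
noncomputable def gammaStar {L : Type*} (ρ : L → L → ℝ → ℝ) (A B : Set L) (x : ℝ) : ℝ :=
  sInf ((fun p => probDistToSet ρ p B x) '' A)

/-- `F*_{AB}`, the left-continuous regularization of `Γ*_{AB}`: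
`F*_{AB}(x) = sup_{x' < x} Γ*_{AB}(x')`. -/
noncomputable def fStar {L : Type*} (ρ : L → L → ℝ → ℝ) (A B : Set L) (x : ℝ) : ℝ :=
  sSup (gammaStar ρ A B '' Set.Iio x)

/-- The probabilistic Pompeiu-Hausdorff distance:
`H(A,B)(x) = F_{AB}(x) = min (F*_{AB}(x)) (F*_{BA}(x))`. -/
noncomputable def probHaus {L : Type*} (ρ : L → L → ℝ → ℝ) (A B : Set L) (x : ℝ) : ℝ :=
  min (fStar ρ A B x) (fStar ρ B A x)

/-- Convergence of a sequence of sets with respect to the probabilistic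
Pompeiu-Hausdorff metric `H`. -/
def HConv {L : Type*} (ρ : L → L → ℝ → ℝ) (An : ℕ → Set L) (A : Set L) : Prop :=
  ∀ t : ℝ, 0 < t → ∃ n₀ : ℕ, ∀ n ≥ n₀, 1 - t < probHaus ρ (An n) A t

/-- Cauchy sequence of sets with respect to the probabilistic Pompeiu-Hausdorff metric `H`. -/
def HCauchy {L : Type*} (ρ : L → L → ℝ → ℝ) (An : ℕ → Set L) : Prop :=
  ∀ t : ℝ, 0 < t → ∃ n₀ : ℕ, ∀ m ≥ n₀, ∀ n ≥ n₀, 1 - t < probHaus ρ (An m) (An n) t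

open Set

lemma isDDF_nonneg {F : ℝ → ℝ} (hF : IsDDF F) (x : ℝ) : 0 ≤ F x := by
  rcases le_or_gt x 0 with h | h
  · rw [hF.2.2.2 x h]
  · rw [← hF.2.2.2 0 le_rfl]; exact hF.1 h.le

lemma isDDF_sSup_Iio {F : ℝ → ℝ} (hF : IsDDF F) (x : ℝ) :
    F x = sSup (F '' Set.Iio x) :=
  tendsto_nhds_unique (hF.2.1 x) (hF.1.tendsto_nhdsLT x)

lemma isDDF_of {F : ℝ → ℝ} (hm : Monotone F) (h1 : ∀ x, F x ≤ 1)
    (h0 : ∀ x ≤ 0, F x = 0) (hl : ∀ x, F x = sSup (F '' Set.Iio x)) : IsDDF F := by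
  refine ⟨hm, fun x => ?_, h1, h0⟩
  have := hm.tendsto_nhdsLT x
  rw [← hl x] at this
  exact this

section PD

variable {L : Type*} {ρ : L → L → ℝ → ℝ} (hDDF : ∀ p q, IsDDF (ρ p q))
variable {A B : Set L}
include hDDF

omit hDDF in
lemma pdts_img_ne (p : L) (hB : B.Nonempty) (x : ℝ) :
    ((fun q => ρ p q x) '' B).Nonempty := hB.image _

lemma pdts_bdd (p : L) (x : ℝ) : BddAbove ((fun q => ρ p q x) '' B) := by
  refine ⟨1, ?_⟩; rintro _ ⟨q, _, rfl⟩; exact (hDDF p q).2.2.1 x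

lemma le_pdts (p : L) {q : L} (hq : q ∈ B) (x : ℝ) :
    ρ p q x ≤ probDistToSet ρ p B x :=
  le_csSup (pdts_bdd hDDF p x) ⟨q, hq, rfl⟩

lemma pdts_le_one (p : L) (hB : B.Nonempty) (x : ℝ) : probDistToSet ρ p B x ≤ 1 := by
  refine csSup_le (pdts_img_ne p hB x) ?_
  rintro _ ⟨q, _, rfl⟩; exact (hDDF p q).2.2.1 x

lemma pdts_nonneg (p : L) (hB : B.Nonempty) (x : ℝ) : 0 ≤ probDistToSet ρ p B x := by
  obtain ⟨q, hq⟩ := hB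
  exact (isDDF_nonneg (hDDF p q) x).trans (le_pdts hDDF p hq x)

lemma pdts_mono (p : L) (hB : B.Nonempty) : Monotone (probDistToSet ρ p B) := by
  intro x y hxy
  refine csSup_le (pdts_img_ne p hB x) ?_
  rintro _ ⟨q, hq, rfl⟩
  exact ((hDDF p q).1 hxy).trans (le_pdts hDDF p hq y)

lemma pdts_zero (p : L) (hB : B.Nonempty) {x : ℝ} (hx : x ≤ 0) :
    probDistToSet ρ p B x = 0 := by
  refine le_antisymm ?_ (pdts_nonneg hDDF p hB x)
  refine csSup_le (pdts_img_ne p hB x) ?_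
  rintro _ ⟨q, _, rfl⟩; exact ((hDDF p q).2.2.2 x hx).le

lemma pdts_isDDF (p : L) (hB : B.Nonempty) : IsDDF (probDistToSet ρ p B) := by
  refine isDDF_of (pdts_mono hDDF p hB) (pdts_le_one hDDF p hB)
    (fun x hx => pdts_zero hDDF p hB hx) (fun x => le_antisymm ?_ ?_)
  · refine csSup_le (pdts_img_ne p hB x) ?_
    rintro _ ⟨q, hq, rfl⟩
    show ρ p q x ≤ _
    rw [isDDF_sSup_Iio (hDDF p q) x]
    refine csSup_le ((nonempty_Iio.image _)) ?_
    rintro _ ⟨x', hx', rfl⟩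
    refine (le_pdts hDDF p hq x').trans (le_csSup ?_ ⟨x', hx', rfl⟩)
    exact ⟨1, by rintro _ ⟨y, _, rfl⟩; exact pdts_le_one hDDF p hB y⟩
  · refine csSup_le (nonempty_Iio.image _) ?_
    rintro _ ⟨x', hx', rfl⟩
    exact pdts_mono hDDF p hB hx'.le

omit hDDF in
lemma gam_img_ne (hA : A.Nonempty) (x : ℝ) :
    ((fun p => probDistToSet ρ p B x) '' A).Nonempty := hA.image _

lemma gam_bddBelow (hB : B.Nonempty) (x : ℝ) :
    BddBelow ((fun p => probDistToSet ρ p B x) '' A) := by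
  refine ⟨0, ?_⟩; rintro _ ⟨p, _, rfl⟩; exact pdts_nonneg hDDF p hB x

lemma gam_le_pdts {p : L} (hp : p ∈ A) (hB : B.Nonempty) (x : ℝ) :
    gammaStar ρ A B x ≤ probDistToSet ρ p B x :=
  csInf_le (gam_bddBelow hDDF hB x) ⟨p, hp, rfl⟩

omit hDDF in
lemma le_gam {c : ℝ} (hA : A.Nonempty) (h : ∀ p ∈ A, c ≤ probDistToSet ρ p B x) :
    c ≤ gammaStar ρ A B x := by
  refine le_csInf (gam_img_ne hA x) ?_
  rintro _ ⟨p, hp, rfl⟩; exact h p hp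

lemma gam_nonneg (hA : A.Nonempty) (hB : B.Nonempty) (x : ℝ) :
    0 ≤ gammaStar ρ A B x :=
  le_gam hA fun p _ => pdts_nonneg hDDF p hB x

lemma gam_le_one (hA : A.Nonempty) (hB : B.Nonempty) (x : ℝ) :
    gammaStar ρ A B x ≤ 1 := by
  obtain ⟨p, hp⟩ := hA
  exact (gam_le_pdts hDDF hp hB x).trans (pdts_le_one hDDF p hB x)

lemma gam_mono (hA : A.Nonempty) (hB : B.Nonempty) :
    Monotone (gammaStar ρ A B) := by
  intro x y hxy
  refine le_gam hA fun p hp => ?_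
  exact (gam_le_pdts hDDF hp hB x).trans (pdts_mono hDDF p hB hxy)

lemma gam_zero (hA : A.Nonempty) (hB : B.Nonempty) {x : ℝ} (hx : x ≤ 0) :
    gammaStar ρ A B x = 0 := by
  refine le_antisymm ?_ (gam_nonneg hDDF hA hB x)
  obtain ⟨p, hp⟩ := hA
  rw [← pdts_zero hDDF p hB hx]
  exact gam_le_pdts hDDF hp hB x

omit hDDF in
lemma fStar_img_ne (x : ℝ) : (gammaStar ρ A B '' Set.Iio x).Nonempty :=
  nonempty_Iio.image _

lemma fStar_bdd (hA : A.Nonempty) (hB : B.Nonempty) (x : ℝ) :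
    BddAbove (gammaStar ρ A B '' Set.Iio x) := by
  refine ⟨1, ?_⟩; rintro _ ⟨x', _, rfl⟩; exact gam_le_one hDDF hA hB x'

lemma gam_le_fStar (hA : A.Nonempty) (hB : B.Nonempty) {x' x : ℝ} (h : x' < x) :
    gammaStar ρ A B x' ≤ fStar ρ A B x :=
  le_csSup (fStar_bdd hDDF hA hB x) ⟨x', h, rfl⟩

lemma fStar_le_gam (hA : A.Nonempty) (hB : B.Nonempty) (x : ℝ) :
    fStar ρ A B x ≤ gammaStar ρ A B x := by
  refine csSup_le (fStar_img_ne x) ?_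
  rintro _ ⟨x', hx', rfl⟩
  exact gam_mono hDDF hA hB hx'.le

lemma fStar_le_one (hA : A.Nonempty) (hB : B.Nonempty) (x : ℝ) :
    fStar ρ A B x ≤ 1 :=
  (fStar_le_gam hDDF hA hB x).trans (gam_le_one hDDF hA hB x)

lemma fStar_nonneg (hA : A.Nonempty) (hB : B.Nonempty) (x : ℝ) :
    0 ≤ fStar ρ A B x :=
  (gam_nonneg hDDF hA hB (x - 1)).trans
    (gam_le_fStar hDDF hA hB (by linarith))

lemma fStar_mono (hA : A.Nonempty) (hB : B.Nonempty) : Monotone (fStar ρ A B) := by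
  intro x y hxy
  refine csSup_le (fStar_img_ne x) ?_
  rintro _ ⟨x', hx', rfl⟩
  exact gam_le_fStar hDDF hA hB (hx'.trans_le hxy)

lemma fStar_zero (hA : A.Nonempty) (hB : B.Nonempty) {x : ℝ} (hx : x ≤ 0) :
    fStar ρ A B x = 0 := by
  refine le_antisymm ?_ (fStar_nonneg hDDF hA hB x)
  refine csSup_le (fStar_img_ne x) ?_
  rintro _ ⟨x', hx', rfl⟩
  exact (gam_zero hDDF hA hB (hx'.le.trans hx)).le

lemma fStar_isDDF (hA : A.Nonempty) (hB : B.Nonempty) : IsDDF (fStar ρ A B) := by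
  refine isDDF_of (fStar_mono hDDF hA hB) (fStar_le_one hDDF hA hB)
    (fun x hx => fStar_zero hDDF hA hB hx) (fun x => le_antisymm ?_ ?_)
  · refine csSup_le (fStar_img_ne x) ?_
    rintro _ ⟨x', hx', rfl⟩
    have hxx : x' < x := hx'
    have h1 : x' < (x' + x) / 2 := by linarith
    have h2 : (x' + x) / 2 < x := by linarith
    refine (gam_le_fStar hDDF hA hB h1).trans (le_csSup ?_ ⟨_, h2, rfl⟩)
    exact ⟨1, by rintro _ ⟨y, _, rfl⟩; exact fStar_le_one hDDF hA hB y⟩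
  · refine csSup_le (nonempty_Iio.image _) ?_
    rintro _ ⟨x', hx', rfl⟩
    exact fStar_mono hDDF hA hB hx'.le

end PD


lemma min_isDDF {F G : ℝ → ℝ} (hF : IsDDF F) (hG : IsDDF G) :
    IsDDF (fun x => min (F x) (G x)) :=
  ⟨fun a b hab => min_le_min (hF.1 hab) (hG.1 hab),
   fun x => (hF.2.1 x).min (hG.2.1 x),
   fun x => (min_le_left _ _).trans (hF.2.2.1 x),
   fun x hx => by
    show min (F x) (G x) = 0
    rw [hF.2.2.2 x hx, hG.2.2.2 x hx, min_self]⟩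

section Main

variable {L : Type*} {ρ : L → L → ℝ → ℝ} {τ : (ℝ → ℝ) → (ℝ → ℝ) → (ℝ → ℝ)}
variable {A B C : Set L}

lemma probHaus_isDDF (hDDF : ∀ p q, IsDDF (ρ p q)) (hA : A.Nonempty) (hB : B.Nonempty) :
    IsDDF (probHaus ρ A B) :=
  min_isDDF (fStar_isDDF hDDF hA hB) (fStar_isDDF hDDF hB hA)

lemma probHaus_le_fStar (x : ℝ) : probHaus ρ A B x ≤ fStar ρ A B x := min_le_left _ _

lemma probHaus_le_fStar' (x : ℝ) : probHaus ρ A B x ≤ fStar ρ B A x := min_le_right _ _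

lemma subset_of_fStar (hPM : IsPMSpace ρ τ) (hA : A.Nonempty) (hB : B.Nonempty)
    (hBc : SClosed ρ B) (h : ∀ x : ℝ, 0 < x → 1 ≤ fStar ρ A B x) : A ⊆ B := by
  have hDDF := hPM.isDDF
  intro p hp
  have key : ∀ t : ℝ, 0 < t → 1 ≤ probDistToSet ρ p B t := fun t ht =>
    (h t ht).trans ((fStar_le_gam hDDF hA hB t).trans (gam_le_pdts hDDF hp hB t))
  have hex : ∀ n : ℕ, ∃ q ∈ B, 1 - 1/(n+1 : ℝ) < ρ p q (1/(n+1 : ℝ)) := by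
    intro n
    have hpos : (0:ℝ) < 1/(n+1) := by positivity
    have h1 : 1 - 1/(n+1:ℝ) < probDistToSet ρ p B (1/(n+1)) :=
      lt_of_lt_of_le (by linarith) (key _ hpos)
    obtain ⟨a, ⟨q, hq, rfl⟩, ha⟩ := exists_lt_of_lt_csSup (pdts_img_ne p hB _) h1
    exact ⟨q, hq, ha⟩
  choose qn hqB hq using hex
  refine hBc ⟨qn, hqB, ?_⟩
  intro t ht
  obtain ⟨n₀, hn₀⟩ := exists_nat_one_div_lt ht
  refine ⟨n₀, fun n hn => ?_⟩
  have hcast : (n₀ + 1 : ℝ) ≤ (n + 1 : ℝ) := by exact_mod_cast Nat.succ_le_succ hn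
  have h1 : (1:ℝ)/(n+1) ≤ 1/(n₀+1) := one_div_le_one_div_of_le (by positivity) hcast
  have h2 : (1:ℝ)/(n+1) < t := lt_of_le_of_lt h1 hn₀
  rw [hPM.symm (qn n) p]
  calc 1 - t < 1 - 1/(n+1:ℝ) := by linarith
    _ < ρ p (qn n) (1/(n+1:ℝ)) := hq n
    _ ≤ ρ p (qn n) t := (hDDF p (qn n)).1 h2.le

lemma tau_pdts_le (hPM : IsPMSpace ρ τ) (hsup : SupContinuous τ) (p : L)
    (hB : B.Nonempty) {G : ℝ → ℝ} (hG : IsDDF G) {c : ℝ → ℝ}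
    (hbound : ∀ q ∈ B, ∀ y : ℝ, τ (ρ p q) G y ≤ c y) (x : ℝ) :
    τ (probDistToSet ρ p B) G x ≤ c x := by
  set S : Set (ℝ → ℝ) := (fun q => ρ p q) '' B with hS
  haveI : Nonempty ↥S := (hB.image _).to_subtype
  have hFi : ∀ i : ↥S, IsDDF (i : ℝ → ℝ) := by
    rintro ⟨_, q, hq, rfl⟩; exact hPM.isDDF p q
  have hfun : probDistToSet ρ p B = fun y => ⨆ i : ↥S, (i : ℝ → ℝ) y := by
    funext y
    rw [probDistToSet,
      show ((fun q => ρ p q y) '' B) = (fun F : ℝ → ℝ => F y) '' S by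
        rw [hS, Set.image_image],
      Set.image_eq_range, ← sSup_range]
  rw [hfun, hsup ↥S (fun i => (i : ℝ → ℝ)) G hFi hG x]
  refine ciSup_le ?_
  rintro ⟨_, q, hq, rfl⟩
  exact hbound q hq x

lemma tau_rho_pdts_le (hPM : IsPMSpace ρ τ) (hsup : SupContinuous τ) (p q : L)
    (hC : C.Nonempty) (x : ℝ) :
    τ (ρ p q) (probDistToSet ρ q C) x ≤ probDistToSet ρ p C x := by
  have hDDF := hPM.isDDF
  rw [hPM.triangleFn.comm _ _ (hDDF p q) (pdts_isDDF hDDF q hC)]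
  refine tau_pdts_le hPM hsup q hC (hDDF p q) (fun r hr y => ?_) x
  have hcomm := congrFun (hPM.triangleFn.comm _ _ (hDDF q r) (hDDF p q)) y
  rw [hcomm]
  exact (hPM.tri_ineq p q r y).trans (le_pdts hDDF p hr y)

lemma tau_fStar_le_gam (hPM : IsPMSpace ρ τ) (hsup : SupContinuous τ)
    (hA : A.Nonempty) (hB : B.Nonempty) (hC : C.Nonempty) (x : ℝ) :
    τ (fStar ρ A B) (fStar ρ B C) x ≤ gammaStar ρ A C x := by
  have hDDF := hPM.isDDF
  refine le_gam hA (fun p hp => ?_)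
  have hle1 : fStar ρ A B ≤ probDistToSet ρ p B := fun y =>
    (fStar_le_gam hDDF hA hB y).trans (gam_le_pdts hDDF hp hB y)
  have step0 : τ (fStar ρ A B) (fStar ρ B C) x ≤
      τ (probDistToSet ρ p B) (fStar ρ B C) x :=
    hPM.triangleFn.mono _ _ _ _ (fStar_isDDF hDDF hA hB) (pdts_isDDF hDDF p hB)
      (fStar_isDDF hDDF hB hC) (fStar_isDDF hDDF hB hC) hle1 le_rfl x
  refine step0.trans ?_
  refine tau_pdts_le hPM hsup p hB (fStar_isDDF hDDF hB hC) (fun q hq y => ?_) x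
  have hle2 : fStar ρ B C ≤ probDistToSet ρ q C := fun z =>
    (fStar_le_gam hDDF hB hC z).trans (gam_le_pdts hDDF hq hC z)
  have step1 : τ (ρ p q) (fStar ρ B C) y ≤ τ (ρ p q) (probDistToSet ρ q C) y :=
    hPM.triangleFn.mono _ _ _ _ (hDDF p q) (hDDF p q)
      (fStar_isDDF hDDF hB hC) (pdts_isDDF hDDF q hC) le_rfl hle2 y
  exact step1.trans (tau_rho_pdts_le hPM hsup p q hC y)

lemma tau_probHaus_le_fStar (hPM : IsPMSpace ρ τ) (hsup : SupContinuous τ)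
    (hA : A.Nonempty) (hB : B.Nonempty) (hC : C.Nonempty) (x : ℝ) :
    τ (probHaus ρ A B) (probHaus ρ B C) x ≤ fStar ρ A C x := by
  have hDDF := hPM.isDDF
  have hT : IsDDF (τ (probHaus ρ A B) (probHaus ρ B C)) :=
    hPM.triangleFn.isDDF _ _ (probHaus_isDDF hDDF hA hB) (probHaus_isDDF hDDF hB hC)
  rw [isDDF_sSup_Iio hT x]
  refine csSup_le (nonempty_Iio.image _) ?_
  rintro _ ⟨x', hx', rfl⟩
  have step0 : τ (probHaus ρ A B) (probHaus ρ B C) x' ≤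
      τ (fStar ρ A B) (fStar ρ B C) x' :=
    hPM.triangleFn.mono _ _ _ _ (probHaus_isDDF hDDF hA hB) (fStar_isDDF hDDF hA hB)
      (probHaus_isDDF hDDF hB hC) (fStar_isDDF hDDF hB hC)
      (fun y => probHaus_le_fStar y) (fun y => probHaus_le_fStar y) x'
  exact step0.trans ((tau_fStar_le_gam hPM hsup hA hB hC x').trans
    (gam_le_fStar hDDF hA hC hx'))

end Main

/-- If the triangle function `τ` of a PM space is sup-continuous, then
`H(A,B) = F_{AB}` is a probabilistic metric on the family `P_f(L)` of nonempty closed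
subsets of `L`, with triangle function `τ`. -/
theorem probHaus_isProbabilisticMetric {L : Type*} (ρ : L → L → ℝ → ℝ)
    (τ : (ℝ → ℝ) → (ℝ → ℝ) → (ℝ → ℝ)) (hPM : IsPMSpace ρ τ)
    (hsup : SupContinuous τ) :
    (∀ A : Set L, A.Nonempty → SClosed ρ A → probHaus ρ A A = eps0) ∧
    (∀ A B : Set L, A.Nonempty → SClosed ρ A → B.Nonempty → SClosed ρ B →
      probHaus ρ A B = eps0 → A = B) ∧
    (∀ A B : Set L, A.Nonempty → SClosed ρ A → B.Nonempty → SClosed ρ B →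
      probHaus ρ A B = probHaus ρ B A) ∧
    (∀ A B C : Set L, A.Nonempty → SClosed ρ A → B.Nonempty → SClosed ρ B →
      C.Nonempty → SClosed ρ C →
      τ (probHaus ρ A B) (probHaus ρ B C) ≤ probHaus ρ A C) := by
  have hDDF := hPM.isDDF
  refine ⟨?_, ?_, ?_, ?_⟩
  · intro A hA _
    funext x
    rcases le_or_gt x 0 with hx | hx
    · simp only [probHaus, fStar_zero hDDF hA hA hx, min_self, eps0, if_pos hx]
    · have gam_one : ∀ y : ℝ, 0 < y → gammaStar ρ A A y = 1 := by
        intro y hy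
        refine le_antisymm (gam_le_one hDDF hA hA y) (le_gam hA fun p hp => ?_)
        have h : ρ p p y = 1 := by rw [hPM.refl p]; simp [eps0, not_le.2 hy]
        rw [← h]
        exact le_pdts hDDF p hp y
      have h1 : fStar ρ A A x = 1 := by
        refine le_antisymm (fStar_le_one hDDF hA hA x) ?_
        have h2 := gam_le_fStar hDDF hA hA (half_lt_self hx)
        rwa [gam_one _ (half_pos hx)] at h2
      simp only [probHaus, h1, min_self, eps0, if_neg (not_le.2 hx)]
  · intro A B hA hAc hB hBc heq
    have h1 : ∀ x : ℝ, 0 < x → 1 ≤ fStar ρ A B x := by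
      intro x hx
      have h := congrFun heq x
      simp only [probHaus, eps0, if_neg (not_le.2 hx)] at h
      calc (1:ℝ) = min (fStar ρ A B x) (fStar ρ B A x) := h.symm
        _ ≤ fStar ρ A B x := min_le_left _ _
    have h2 : ∀ x : ℝ, 0 < x → 1 ≤ fStar ρ B A x := by
      intro x hx
      have h := congrFun heq x
      simp only [probHaus, eps0, if_neg (not_le.2 hx)] at h
      calc (1:ℝ) = min (fStar ρ A B x) (fStar ρ B A x) := h.symm
        _ ≤ fStar ρ B A x := min_le_right _ _
    exact Set.Subset.antisymm (subset_of_fStar hPM hA hB hBc h1)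
      (subset_of_fStar hPM hB hA hAc h2)
  · intro A B _ _ _ _
    funext x
    exact min_comm _ _
  · intro A B C hA _ hB _ hC _
    intro x
    refine le_min (tau_probHaus_le_fStar hPM hsup hA hB hC x) ?_
    have hcomm := congrFun (hPM.triangleFn.comm _ _ (probHaus_isDDF hDDF hA hB)
      (probHaus_isDDF hDDF hB hC)) x
    rw [hcomm]
    have hBC : probHaus ρ B C = probHaus ρ C B := funext fun y => min_comm _ _
    have hAB : probHaus ρ A B = probHaus ρ B A := funext fun y => min_comm _ _
    rw [hBC, hAB]
    exact tau_probHaus_le_fStar hPM hsup hC hB hA x
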